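/- arXiv:1805.01018 — 6 statements merged into one kernel-verified Lean document; each statement's English description precedes it below -/
import Mathlib

section
/- Let X be a bounded operator on a reproducing kernel Hilbert space with Cartesian decomposition X = H + iK where H and K are self-adjoint. Then ber(H) ≤ ber(X) ≤ sqrt(ber(H)² + ber(K)²). -/
variable {E : Type*} [NormedAddCommGroup E] [InnerProductSpace ℂ E] [CompleteSpace E] {Ω : Type*}

/-- Berezin number of `A` w.r.t. the family of normalized reproducing kernels `k`. -/
noncomputable def ber (k : Ω → E) (A : E →L[ℂ] E) : ℝ :=
  ⨆ p : Ω, ‖(inner ℂ (A (k p)) (k p) : ℂ)‖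

noncomputable def adj (A : E →L[ℂ] E) : E →L[ℂ] E := ContinuousLinearMap.adjoint A

/-- Real part `(T + T*)/2`. -/
noncomputable def reOp (T : E →L[ℂ] E) : E →L[ℂ] E := (2 : ℂ)⁻¹ • (T + adj T)

/-- Imaginary part `(T - T*)/(2i)`. -/
noncomputable def imOp (T : E →L[ℂ] E) : E →L[ℂ] E := (2 * Complex.I)⁻¹ • (T - adj T)

/-- `|X| = (X*X)^{1/2}`. -/
noncomputable def absOp (X : E →L[ℂ] E) : E →L[ℂ] E := CFC.sqrt (adj X * X)

lemma inner_reOp (X : E →L[ℂ] E) (v : E) :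
    (inner ℂ (reOp X v) v : ℂ) = ((inner ℂ (X v) v : ℂ).re : ℂ) := by
  have hadj : (inner ℂ (adj X v) v : ℂ) = starRingEnd ℂ (inner ℂ (X v) v) := by
    rw [adj, ContinuousLinearMap.adjoint_inner_left, inner_conj_symm]
  simp only [reOp, ContinuousLinearMap.smul_apply, ContinuousLinearMap.add_apply,
    inner_smul_left, inner_add_left, hadj, Complex.add_conj]
  push_cast
  rw [map_inv₀, map_ofNat]
  ring

lemma inner_imOp (X : E →L[ℂ] E) (v : E) :
    (inner ℂ (imOp X v) v : ℂ) = -(((inner ℂ (X v) v : ℂ).im : ℂ)) := by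
  have hadj : (inner ℂ (adj X v) v : ℂ) = starRingEnd ℂ (inner ℂ (X v) v) := by
    rw [adj, ContinuousLinearMap.adjoint_inner_left, inner_conj_symm]
  simp only [imOp, ContinuousLinearMap.smul_apply, ContinuousLinearMap.sub_apply,
    inner_smul_left, inner_sub_left, hadj, Complex.sub_conj, map_inv₀, map_mul, map_ofNat,
    Complex.conj_I]
  field_simp
  ring_nf
  push_cast
  ring

theorem stmt1 (k : Ω → E) (hk : ∀ p, ‖k p‖ = 1) (X : E →L[ℂ] E) :
    ber k (reOp X) ≤ ber k X ∧
    ber k X ≤ Real.sqrt ((ber k (reOp X)) ^ 2 + (ber k (imOp X)) ^ 2) := by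
  have hb : ∀ p, ‖(inner ℂ (X (k p)) (k p) : ℂ)‖ ≤ ‖X‖ := by
    intro p
    calc ‖(inner ℂ (X (k p)) (k p) : ℂ)‖ ≤ ‖X (k p)‖ * ‖k p‖ := norm_inner_le_norm _ _
      _ ≤ ‖X‖ * ‖k p‖ * ‖k p‖ := by gcongr; exact X.le_opNorm _
      _ = ‖X‖ := by rw [hk p]; ring
  have hnre : ∀ p, ‖(inner ℂ (reOp X (k p)) (k p) : ℂ)‖
      = |((inner ℂ (X (k p)) (k p) : ℂ)).re| := by
    intro p; rw [inner_reOp]; simp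
  have hnim : ∀ p, ‖(inner ℂ (imOp X (k p)) (k p) : ℂ)‖
      = |((inner ℂ (X (k p)) (k p) : ℂ)).im| := by
    intro p; rw [inner_imOp]; simp
  have habs : ∀ p, |((inner ℂ (X (k p)) (k p) : ℂ)).re| ≤ ‖(inner ℂ (X (k p)) (k p) : ℂ)‖ :=
    fun p => Complex.abs_re_le_norm _
  have habsi : ∀ p, |((inner ℂ (X (k p)) (k p) : ℂ)).im| ≤ ‖(inner ℂ (X (k p)) (k p) : ℂ)‖ :=
    fun p => Complex.abs_im_le_norm _
  have hbX : BddAbove (Set.range fun p => ‖(inner ℂ (X (k p)) (k p) : ℂ)‖) :=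
    ⟨‖X‖, by rintro _ ⟨p, rfl⟩; exact hb p⟩
  have hbre : BddAbove (Set.range fun p => ‖(inner ℂ (reOp X (k p)) (k p) : ℂ)‖) :=
    ⟨‖X‖, by rintro _ ⟨p, rfl⟩; exact ((hnre p).le.trans ((habs p).trans (hb p)))⟩
  have hbim : BddAbove (Set.range fun p => ‖(inner ℂ (imOp X (k p)) (k p) : ℂ)‖) :=
    ⟨‖X‖, by rintro _ ⟨p, rfl⟩; exact ((hnim p).le.trans ((habsi p).trans (hb p)))⟩
  constructor
  · refine Real.iSup_le (fun p => ?_) (Real.iSup_nonneg fun p => norm_nonneg _)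
    rw [hnre p]
    exact (habs p).trans (le_ciSup hbX p)
  · refine Real.iSup_le (fun p => ?_) (Real.sqrt_nonneg _)
    have h1 : |((inner ℂ (X (k p)) (k p) : ℂ)).re| ≤ ber k (reOp X) := by
      rw [← hnre p]; exact le_ciSup hbre p
    have h2 : |((inner ℂ (X (k p)) (k p) : ℂ)).im| ≤ ber k (imOp X) := by
      rw [← hnim p]; exact le_ciSup hbim p
    have : ‖(inner ℂ (X (k p)) (k p) : ℂ)‖
        = Real.sqrt (((inner ℂ (X (k p)) (k p) : ℂ)).re ^ 2
          + ((inner ℂ (X (k p)) (k p) : ℂ)).im ^ 2) := by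
      rw [Complex.norm_def, Complex.normSq_apply]; ring_nf
    rw [this]
    apply Real.sqrt_le_sqrt
    have e1 : ((inner ℂ (X (k p)) (k p) : ℂ)).re ^ 2 ≤ (ber k (reOp X)) ^ 2 := by
      rw [← sq_abs]; exact pow_le_pow_left₀ (abs_nonneg _) h1 2
    have e2 : ((inner ℂ (X (k p)) (k p) : ℂ)).im ^ 2 ≤ (ber k (imOp X)) ^ 2 := by
      rw [← sq_abs]; exact pow_le_pow_left₀ (abs_nonneg _) h2 2
    linarith
end

section
/- Let A, X be bounded operators on a reproducing kernel Hilbert space, and let X = H + iK be the Cartesian decomposition of X. Then ber²(AX ± XA*) ≤ 2‖A‖² ( ber(H²) + ber(K²) + sqrt( (ber(H²) − ber(K²))² + ber²(HK + KH) ) ). -/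
variable {E : Type*} [NormedAddCommGroup E] [InnerProductSpace ℂ E] [CompleteSpace E] {Ω : Type*}

local notation "⟪" x ", " y "⟫" => (inner ℂ x y : ℂ)

open ContinuousLinearMap in
lemma reOp_sa (X : E →L[ℂ] E) : adj (reOp X) = reOp X := by
  simp only [reOp, adj, ← star_eq_adjoint, star_smul, star_add, star_star]
  rw [add_comm (star X) X]
  congr 1
  simp [Complex.ext_iff]

open ContinuousLinearMap in
lemma imOp_sa (X : E →L[ℂ] E) : adj (imOp X) = imOp X := by
  simp only [imOp, adj, ← star_eq_adjoint, star_smul, star_sub, star_star]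
  rw [show star X - X = -(X - star X) by abel, smul_neg, ← neg_smul]
  congr 1
  simp [Complex.ext_iff]

lemma X_decomp (X : E →L[ℂ] E) (f : E) : X f = reOp X f + Complex.I • imOp X f := by
  have hI : Complex.I * (2 * Complex.I)⁻¹ = (2:ℂ)⁻¹ := by
    rw [mul_inv, Complex.inv_I]
    have : Complex.I * (-Complex.I) = 1 := by simp [Complex.ext_iff]
    field_simp
    simp
  simp only [reOp, imOp, ContinuousLinearMap.smul_apply, ContinuousLinearMap.add_apply,
    ContinuousLinearMap.sub_apply, smul_smul, hI]
  rw [smul_sub, smul_add]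
  match_scalars <;> ring

lemma adjX_decomp (X : E →L[ℂ] E) (f : E) : adj X f = reOp X f - Complex.I • imOp X f := by
  have hI : Complex.I * (2 * Complex.I)⁻¹ = (2:ℂ)⁻¹ := by
    rw [mul_inv, Complex.inv_I]
    field_simp
    simp
  simp only [reOp, imOp, ContinuousLinearMap.smul_apply, ContinuousLinearMap.add_apply,
    ContinuousLinearMap.sub_apply, smul_smul, hI]
  rw [smul_sub, smul_add]
  match_scalars <;> ring

lemma quad_le (a b c s t : ℝ) (ha : 0 ≤ a) (hb : 0 ≤ b) :
    s^2*a + t^2*b + s*t*c ≤ (s^2+t^2) * ((a+b+Real.sqrt ((a-b)^2+c^2))/2) := by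
  set S := Real.sqrt ((a-b)^2+c^2) with hSdef
  have hS0 : 0 ≤ S := Real.sqrt_nonneg _
  have hS : S^2 = (a-b)^2+c^2 := Real.sq_sqrt (by positivity)
  have key : (s^2-t^2)*(a-b) + 2*(s*t)*c ≤ (s^2+t^2)*S := by
    have h1 : ((s^2-t^2)*(a-b) + 2*(s*t)*c)^2 ≤ ((s^2+t^2)*S)^2 := by
      have hR : ((s^2+t^2)*S)^2 = (s^2+t^2)^2*((a-b)^2+c^2) := by rw [mul_pow, hS]
      rw [hR]
      nlinarith [sq_nonneg ((s^2-t^2)*c - 2*(s*t)*(a-b))]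
    have h2 : (0:ℝ) ≤ (s^2+t^2)*S := by positivity
    calc (s^2-t^2)*(a-b) + 2*(s*t)*c ≤ |(s^2-t^2)*(a-b) + 2*(s*t)*c| := le_abs_self _
      _ = Real.sqrt (((s^2-t^2)*(a-b) + 2*(s*t)*c)^2) := (Real.sqrt_sq_eq_abs _).symm
      _ ≤ Real.sqrt (((s^2+t^2)*S)^2) := Real.sqrt_le_sqrt h1
      _ = (s^2+t^2)*S := Real.sqrt_sq h2
  nlinarith [key]

lemma lip (x y c : ℝ) : Real.sqrt (x^2+c^2) ≤ |x - y| + Real.sqrt (y^2+c^2) := by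
  have hS : |y| ≤ Real.sqrt (y^2+c^2) := by
    rw [← Real.sqrt_sq_eq_abs]
    exact Real.sqrt_le_sqrt (by nlinarith [sq_nonneg c])
  have h0 : (0:ℝ) ≤ |x-y| + Real.sqrt (y^2+c^2) := by positivity
  rw [show |x-y| + Real.sqrt (y^2+c^2) = Real.sqrt ((|x-y| + Real.sqrt (y^2+c^2))^2) from
    (Real.sqrt_sq h0).symm]
  apply Real.sqrt_le_sqrt
  have hy2 : (Real.sqrt (y^2+c^2))^2 = y^2+c^2 := Real.sq_sqrt (by positivity)
  have h1 : (x-y)*y ≤ |x-y| * |y| := by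
    calc (x-y)*y ≤ |(x-y)*y| := le_abs_self _
      _ = |x - y| * |y| := abs_mul _ _
  nlinarith [mul_le_mul_of_nonneg_left hS (abs_nonneg (x-y)), h1, sq_abs (x-y)]

lemma mono_aux (a b c al be ga : ℝ) (ha : 0 ≤ a) (hb : 0 ≤ b) (haal : a ≤ al)
    (hbbe : b ≤ be) (hc : |c| ≤ ga) :
    a + b + Real.sqrt ((a-b)^2+c^2) ≤ al + be + Real.sqrt ((al-be)^2+ga^2) := by
  have h1 := lip (a-b) (al-b) c
  rw [show (a-b) - (al-b) = a-al by ring, abs_of_nonpos (by linarith)] at h1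
  have h2 := lip (al-b) (al-be) c
  rw [show (al-b) - (al-be) = be-b by ring, abs_of_nonneg (by linarith)] at h2
  have hc2 : c^2 ≤ ga^2 := by nlinarith [pow_le_pow_left₀ (abs_nonneg c) hc 2, sq_abs c]
  have h3 : Real.sqrt ((al-be)^2+c^2) ≤ Real.sqrt ((al-be)^2+ga^2) :=
    Real.sqrt_le_sqrt (by linarith)
  linarith

lemma norm_sq_complex (z : ℂ) : ‖z‖^2 = z.re^2 + z.im^2 := by
  rw [Complex.sq_norm, Complex.normSq_apply]; ring

lemma key2 (u v g : E) (M : ℝ) (hg : ‖g‖ ≤ M) :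
    (⟪u, g⟫.re)^2 + (⟪v, g⟫.re)^2 ≤
      M^2 * ((‖u‖^2 + ‖v‖^2 + Real.sqrt ((‖u‖^2-‖v‖^2)^2 + (2*⟪u,v⟫.re)^2))/2) := by
  have hM : 0 ≤ M := le_trans (norm_nonneg g) hg
  set s := (⟪u, g⟫).re with hs
  set t := (⟪v, g⟫).re with ht
  set lam := ((‖u‖^2 + ‖v‖^2 + Real.sqrt ((‖u‖^2-‖v‖^2)^2 + (2*⟪u,v⟫.re)^2))/2) with hlam
  have hlam0 : 0 ≤ lam := by
    rw [hlam]; positivity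
  set w := (s:ℂ) • u + (t:ℂ) • v with hw
  have hn : ‖w‖^2 = s^2*‖u‖^2 + t^2*‖v‖^2 + s*t*(2*⟪u,v⟫.re) := by
    rw [hw, @norm_add_sq ℂ]
    simp only [inner_smul_left, inner_smul_right, norm_smul, Complex.norm_real,
      RCLike.re_to_complex, Complex.conj_ofReal, Complex.mul_re,
      Complex.ofReal_re, Complex.ofReal_im]
    push_cast
    simp only [Real.norm_eq_abs]
    rw [mul_pow, mul_pow, _root_.sq_abs, _root_.sq_abs]
    ring
  have h1 : s^2 + t^2 ≤ ‖w‖ * ‖g‖ := by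
    have hre : ((s:ℝ))^2 + t^2 = (⟪w, g⟫).re := by
      rw [hw]
      simp only [inner_add_left, inner_smul_left, Complex.add_re, Complex.mul_re,
        Complex.conj_ofReal, Complex.ofReal_re, Complex.ofReal_im]
      ring
    rw [hre]
    calc (⟪w, g⟫).re ≤ ‖⟪w, g⟫‖ := Complex.re_le_norm _
      _ ≤ ‖w‖ * ‖g‖ := norm_inner_le_norm _ _
  have hw2 : ‖w‖^2 ≤ (s^2+t^2) * lam := by
    rw [hn]
    exact quad_le _ _ _ _ _ (by positivity) (by positivity)
  rcases eq_or_lt_of_le (by positivity : (0:ℝ) ≤ s^2 + t^2) with h0 | h0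
  · rw [← h0]; positivity
  · have h2 : (s^2+t^2)^2 ≤ ((s^2+t^2) * lam) * M^2 := by
      calc (s^2+t^2)^2 ≤ (‖w‖ * ‖g‖)^2 := by
            apply pow_le_pow_left₀ (by positivity) h1
        _ = ‖w‖^2 * ‖g‖^2 := by ring
        _ ≤ ((s^2+t^2) * lam) * M^2 := by
            apply mul_le_mul hw2 (by apply pow_le_pow_left₀ (norm_nonneg g) hg)
              (by positivity) (by positivity)
    nlinarith [h2, h0]

lemma ber_nonneg (k : Ω → E) (A : E →L[ℂ] E) : 0 ≤ ber k A :=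
  Real.iSup_nonneg fun _ => norm_nonneg _

lemma le_ber (k : Ω → E) (hk : ∀ p, ‖k p‖ = 1) (A : E →L[ℂ] E) (p : Ω) :
    ‖(⟪A (k p), k p⟫ : ℂ)‖ ≤ ber k A := by
  apply le_ciSup (f := fun p => ‖(⟪A (k p), k p⟫ : ℂ)‖)
  refine ⟨‖A‖, ?_⟩
  rintro x ⟨q, rfl⟩
  calc ‖(⟪A (k q), k q⟫ : ℂ)‖ ≤ ‖A (k q)‖ * ‖k q‖ := norm_inner_le_norm _ _
    _ ≤ (‖A‖ * ‖k q‖) * ‖k q‖ := by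
        gcongr
        exact A.le_opNorm _
    _ = ‖A‖ := by rw [hk q]; ring

open ContinuousLinearMap in
lemma inner_sq (H : E →L[ℂ] E) (hH : adj H = H) (f : E) :
    ⟪(H * H) f, f⟫ = ((‖H f‖^2 : ℝ) : ℂ) := by
  have h1 : (H * H) f = (ContinuousLinearMap.adjoint H) (H f) := by
    rw [show ContinuousLinearMap.adjoint H = H from hH]; rfl
  rw [h1, adjoint_inner_left, inner_self_eq_norm_sq_to_K]
  norm_cast

open ContinuousLinearMap in
lemma inner_cross (H K : E →L[ℂ] E) (hH : adj H = H) (hK : adj K = K) (f : E) :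
    ⟪(H * K + K * H) f, f⟫ = ((2 * (⟪H f, K f⟫).re : ℝ) : ℂ) := by
  have h1 : ⟪(H * K) f, f⟫ = ⟪K f, H f⟫ := by
    have : (H * K) f = (ContinuousLinearMap.adjoint H) (K f) := by
      rw [show ContinuousLinearMap.adjoint H = H from hH]; rfl
    rw [this, adjoint_inner_left]
  have h2 : ⟪(K * H) f, f⟫ = ⟪H f, K f⟫ := by
    have : (K * H) f = (ContinuousLinearMap.adjoint K) (H f) := by
      rw [show ContinuousLinearMap.adjoint K = K from hK]; rfl
    rw [this, adjoint_inner_left]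
  rw [ContinuousLinearMap.add_apply, inner_add_left, h1, h2, ← inner_conj_symm (H f) (K f)]
  rw [Complex.conj_re, Complex.add_conj]

open ContinuousLinearMap in
lemma pointwise (A X : E →L[ℂ] E) (f : E) (hf : ‖f‖ = 1) :
    ‖⟪(A * X + X * adj A) f, f⟫‖^2 ≤ 2*‖A‖^2*
      (‖reOp X f‖^2 + ‖imOp X f‖^2 + Real.sqrt ((‖reOp X f‖^2 - ‖imOp X f‖^2)^2 +
        (2*(⟪reOp X f, imOp X f⟫).re)^2)) ∧
    ‖⟪(A * X - X * adj A) f, f⟫‖^2 ≤ 2*‖A‖^2*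
      (‖reOp X f‖^2 + ‖imOp X f‖^2 + Real.sqrt ((‖reOp X f‖^2 - ‖imOp X f‖^2)^2 +
        (2*(⟪reOp X f, imOp X f⟫).re)^2)) := by
  set u := reOp X f with hu
  set v := imOp X f with hv
  set g := (ContinuousLinearMap.adjoint A) f with hg
  have hgA : ‖g‖ ≤ ‖A‖ := by
    calc ‖g‖ ≤ ‖ContinuousLinearMap.adjoint A‖ * ‖f‖ := le_opNorm _ _
      _ = ‖A‖ := by
          rw [hf, mul_one]
          exact LinearIsometryEquiv.norm_map ContinuousLinearMap.adjoint A
  set p := (⟪u, g⟫ : ℂ) with hp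
  set q := (⟪v, g⟫ : ℂ) with hq
  have e1 : ⟪(A * X) f, f⟫ = p - Complex.I * q := by
    have h1 : ⟪(A * X) f, f⟫ = ⟪X f, g⟫ := by
      rw [hg, show (A * X) f = A (X f) from rfl, adjoint_inner_right]
    rw [h1, X_decomp X f, ← hu, ← hv, inner_add_left, inner_smul_left, Complex.conj_I,
      ← hp, ← hq]
    ring
  have e2 : ⟪(X * adj A) f, f⟫ = (starRingEnd ℂ) p - Complex.I * (starRingEnd ℂ) q := by
    have h1 : ⟪(X * adj A) f, f⟫ = ⟪g, (ContinuousLinearMap.adjoint X) f⟫ := by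
      rw [adjoint_inner_right, hg]
      rfl
    rw [h1, show (ContinuousLinearMap.adjoint X) f = adj X f from rfl, adjX_decomp X f,
      ← hu, ← hv, inner_sub_right, inner_smul_right, ← inner_conj_symm g u,
      ← inner_conj_symm g v, ← hp, ← hq]
  set lam := (‖u‖^2 + ‖v‖^2 + Real.sqrt ((‖u‖^2 - ‖v‖^2)^2 + (2*(⟪u, v⟫).re)^2)) with hlam
  constructor
  · have hsum : ⟪(A * X + X * adj A) f, f⟫ = (p - Complex.I * q) +
        ((starRingEnd ℂ) p - Complex.I * (starRingEnd ℂ) q) := by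
      rw [ContinuousLinearMap.add_apply, inner_add_left, e1, e2]
    rw [hsum]
    have hn : ‖(p - Complex.I * q) + ((starRingEnd ℂ) p - Complex.I * (starRingEnd ℂ) q)‖^2
        = 4*((p.re)^2 + (q.re)^2) := by
      rw [norm_sq_complex]
      simp only [Complex.add_re, Complex.sub_re, Complex.mul_re, Complex.add_im,
        Complex.sub_im, Complex.mul_im, Complex.conj_re, Complex.conj_im,
        Complex.I_re, Complex.I_im]
      ring
    rw [hn]
    have k1 := key2 u v g ‖A‖ hgA
    rw [← hp, ← hq, ← hlam] at k1
    nlinarith [k1]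
  · have hsum : ⟪(A * X - X * adj A) f, f⟫ = (p - Complex.I * q) -
        ((starRingEnd ℂ) p - Complex.I * (starRingEnd ℂ) q) := by
      rw [ContinuousLinearMap.sub_apply, inner_sub_left, e1, e2]
    rw [hsum]
    have hn : ‖(p - Complex.I * q) - ((starRingEnd ℂ) p - Complex.I * (starRingEnd ℂ) q)‖^2
        = 4*((p.im)^2 + (q.im)^2) := by
      rw [norm_sq_complex]
      simp only [Complex.sub_re, Complex.mul_re, Complex.sub_im, Complex.mul_im,
        Complex.conj_re, Complex.conj_im, Complex.I_re, Complex.I_im]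
      ring
    rw [hn]
    have hg2 : ‖(-Complex.I) • g‖ ≤ ‖A‖ := by
      rw [norm_smul]
      simp only [norm_neg, Complex.norm_I, one_mul]
      exact hgA
    have k1 := key2 u v ((-Complex.I) • g) ‖A‖ hg2
    have hre1 : (⟪u, (-Complex.I) • g⟫ : ℂ).re = p.re * 0 + p.im := by
      rw [inner_smul_right, ← hp]
      simp [Complex.mul_re]
    have hre2 : (⟪v, (-Complex.I) • g⟫ : ℂ).re = q.re * 0 + q.im := by
      rw [inner_smul_right, ← hq]
      simp [Complex.mul_re]
    rw [hre1, hre2, ← hlam] at k1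
    nlinarith [k1]

theorem stmt2 (k : Ω → E) (hk : ∀ p, ‖k p‖ = 1) (A X : E →L[ℂ] E) :
    (ber k (A * X + X * adj A)) ^ 2 ≤ 2 * ‖A‖ ^ 2 *
      (ber k (reOp X * reOp X) + ber k (imOp X * imOp X) +
        Real.sqrt ((ber k (reOp X * reOp X) - ber k (imOp X * imOp X)) ^ 2 +
          (ber k (reOp X * imOp X + imOp X * reOp X)) ^ 2)) ∧
    (ber k (A * X - X * adj A)) ^ 2 ≤ 2 * ‖A‖ ^ 2 *
      (ber k (reOp X * reOp X) + ber k (imOp X * imOp X) +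
        Real.sqrt ((ber k (reOp X * reOp X) - ber k (imOp X * imOp X)) ^ 2 +
          (ber k (reOp X * imOp X + imOp X * reOp X)) ^ 2)) := by
  have hH : adj (reOp X) = reOp X := reOp_sa X
  have hK : adj (imOp X) = imOp X := imOp_sa X
  set α := ber k (reOp X * reOp X) with hα
  set β := ber k (imOp X * imOp X) with hβ
  set γ := ber k (reOp X * imOp X + imOp X * reOp X) with hγ
  have hα0 : 0 ≤ α := ber_nonneg k _
  have hβ0 : 0 ≤ β := ber_nonneg k _
  have hγ0 : 0 ≤ γ := ber_nonneg k _
  set R := 2*‖A‖^2*(α + β + Real.sqrt ((α-β)^2 + γ^2)) with hR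
  have hsum0 : 0 ≤ α + β + Real.sqrt ((α-β)^2 + γ^2) :=
    add_nonneg (add_nonneg hα0 hβ0) (Real.sqrt_nonneg _)
  have hR0 : 0 ≤ R := by
    rw [hR]
    exact mul_nonneg (by positivity) hsum0
  have hmain : ∀ (T : E →L[ℂ] E),
      (∀ p : Ω, ‖(⟪T (k p), k p⟫ : ℂ)‖^2 ≤ 2*‖A‖^2*(‖reOp X (k p)‖^2 + ‖imOp X (k p)‖^2 +
        Real.sqrt ((‖reOp X (k p)‖^2 - ‖imOp X (k p)‖^2)^2 +
          (2*((⟪reOp X (k p), imOp X (k p)⟫ : ℂ)).re)^2))) →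
      ber k T ^ 2 ≤ R := by
    intro T hT
    have hber : ber k T ≤ Real.sqrt R := by
      unfold ber
      apply Real.iSup_le _ (Real.sqrt_nonneg _)
      intro p
      have ha : ‖reOp X (k p)‖^2 ≤ α := by
        have h1 := le_ber k hk (reOp X * reOp X) p
        rw [inner_sq (reOp X) hH (k p), Complex.norm_real, Real.norm_eq_abs,
          abs_of_nonneg (by positivity)] at h1
        exact h1
      have hb : ‖imOp X (k p)‖^2 ≤ β := by
        have h1 := le_ber k hk (imOp X * imOp X) p
        rw [inner_sq (imOp X) hK (k p), Complex.norm_real, Real.norm_eq_abs,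
          abs_of_nonneg (by positivity)] at h1
        exact h1
      have hc : |2*((⟪reOp X (k p), imOp X (k p)⟫ : ℂ)).re| ≤ γ := by
        have h1 := le_ber k hk (reOp X * imOp X + imOp X * reOp X) p
        rw [inner_cross (reOp X) (imOp X) hH hK (k p), Complex.norm_real,
          Real.norm_eq_abs] at h1
        exact h1
      have hmono := mono_aux (‖reOp X (k p)‖^2) (‖imOp X (k p)‖^2)
        (2*((⟪reOp X (k p), imOp X (k p)⟫ : ℂ)).re) α β γ
        (by positivity) (by positivity) ha hb hc
      have hpt := hT p
      rw [Real.le_sqrt (norm_nonneg _) hR0]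
      calc ‖(⟪T (k p), k p⟫ : ℂ)‖^2 ≤ _ := hpt
        _ ≤ R := by
            rw [hR]
            exact mul_le_mul_of_nonneg_left hmono (by positivity)
    calc ber k T ^ 2 ≤ (Real.sqrt R)^2 := pow_le_pow_left₀ (ber_nonneg k T) hber 2
      _ = R := Real.sq_sqrt hR0
  exact ⟨hmain _ (fun p => (pointwise A X (k p) (hk p)).1),
    hmain _ (fun p => (pointwise A X (k p) (hk p)).2)⟩
end

section
/- Let A, X be bounded operators on a reproducing kernel Hilbert space with X self-adjoint. Then ber(AX ± XA*) ≤ 2‖A‖ · ber(X²)^{1/2}. -/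
variable {E : Type*} [NormedAddCommGroup E] [InnerProductSpace ℂ E] [CompleteSpace E] {Ω : Type*}

theorem stmt4 (k : Ω → E) (hk : ∀ p, ‖k p‖ = 1) (A X : E →L[ℂ] E) (hX : adj X = X) :
    ber k (A * X + X * adj A) ≤ 2 * ‖A‖ * Real.sqrt (ber k (X * X)) ∧
    ber k (A * X - X * adj A) ≤ 2 * ‖A‖ * Real.sqrt (ber k (X * X)) := by
  have hRHS : 0 ≤ 2 * ‖A‖ * Real.sqrt (ber k (X * X)) := by positivity
  have hbdd : BddAbove (Set.range fun p => ‖(inner ℂ ((X * X) (k p)) (k p) : ℂ)‖) := by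
    refine ⟨‖X * X‖, ?_⟩
    rintro _ ⟨p, rfl⟩
    calc ‖(inner ℂ ((X * X) (k p)) (k p) : ℂ)‖ ≤ ‖(X * X) (k p)‖ * ‖k p‖ :=
          norm_inner_le_norm _ _
      _ ≤ (‖X * X‖ * ‖k p‖) * ‖k p‖ := by gcongr; exact (X * X).le_opNorm _
      _ = ‖X * X‖ := by rw [hk p]; ring
  have hXk : ∀ p, ‖X (k p)‖ ≤ Real.sqrt (ber k (X * X)) := by
    intro p
    have h1 : (inner ℂ ((X * X) (k p)) (k p) : ℂ) = inner ℂ (X (k p)) (X (k p)) := by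
      have h := ContinuousLinearMap.adjoint_inner_right X (X (k p)) (k p)
      rw [show ContinuousLinearMap.adjoint X = X from hX] at h
      simp only [ContinuousLinearMap.mul_apply, ← h]
    have h2 : ‖(inner ℂ ((X * X) (k p)) (k p) : ℂ)‖ = ‖X (k p)‖ ^ 2 := by
      rw [h1, inner_self_eq_norm_sq_to_K]; simp [sq]
    have h3 : ‖X (k p)‖ ^ 2 ≤ ber k (X * X) := by
      rw [← h2]; exact le_ciSup hbdd p
    have := Real.sqrt_le_sqrt h3
    rwa [Real.sqrt_sq (norm_nonneg _)] at this
  have hA1 : ∀ p, ‖(inner ℂ (A (X (k p))) (k p) : ℂ)‖ ≤ ‖A‖ * ‖X (k p)‖ := by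
    intro p
    have h := ContinuousLinearMap.adjoint_inner_right A (X (k p)) (k p)
    calc ‖(inner ℂ (A (X (k p))) (k p) : ℂ)‖
        = ‖(inner ℂ (X (k p)) (ContinuousLinearMap.adjoint A (k p)) : ℂ)‖ := by rw [h]
      _ ≤ ‖X (k p)‖ * ‖ContinuousLinearMap.adjoint A (k p)‖ := norm_inner_le_norm _ _
      _ ≤ ‖X (k p)‖ * (‖ContinuousLinearMap.adjoint A‖ * ‖k p‖) := by
          gcongr; exact (ContinuousLinearMap.adjoint A).le_opNorm _
      _ = ‖A‖ * ‖X (k p)‖ := by rw [hk p, LinearIsometryEquiv.norm_map ContinuousLinearMap.adjoint A]; ring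
  have hA2 : ∀ p, ‖(inner ℂ (X (adj A (k p))) (k p) : ℂ)‖ ≤ ‖A‖ * ‖X (k p)‖ := by
    intro p
    have h := ContinuousLinearMap.adjoint_inner_right X (adj A (k p)) (k p)
    rw [show ContinuousLinearMap.adjoint X = X from hX] at h
    calc ‖(inner ℂ (X (adj A (k p))) (k p) : ℂ)‖
        = ‖(inner ℂ (adj A (k p)) (X (k p)) : ℂ)‖ := by rw [h]
      _ ≤ ‖adj A (k p)‖ * ‖X (k p)‖ := norm_inner_le_norm _ _
      _ ≤ (‖adj A‖ * ‖k p‖) * ‖X (k p)‖ := by gcongr; exact (adj A).le_opNorm _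
      _ = ‖A‖ * ‖X (k p)‖ := by
          rw [hk p, adj, LinearIsometryEquiv.norm_map ContinuousLinearMap.adjoint A]; ring
  constructor
  · refine Real.iSup_le (fun p => ?_) hRHS
    calc ‖(inner ℂ ((A * X + X * adj A) (k p)) (k p) : ℂ)‖
        = ‖(inner ℂ (A (X (k p))) (k p) : ℂ) + (inner ℂ (X (adj A (k p))) (k p) : ℂ)‖ := by
          simp [ContinuousLinearMap.add_apply, ContinuousLinearMap.mul_apply, inner_add_left]
      _ ≤ ‖(inner ℂ (A (X (k p))) (k p) : ℂ)‖ + ‖(inner ℂ (X (adj A (k p))) (k p) : ℂ)‖ :=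
          norm_add_le _ _
      _ ≤ ‖A‖ * ‖X (k p)‖ + ‖A‖ * ‖X (k p)‖ := add_le_add (hA1 p) (hA2 p)
      _ = 2 * ‖A‖ * ‖X (k p)‖ := by ring
      _ ≤ 2 * ‖A‖ * Real.sqrt (ber k (X * X)) := by
          gcongr
          · exact hXk p
  · refine Real.iSup_le (fun p => ?_) hRHS
    calc ‖(inner ℂ ((A * X - X * adj A) (k p)) (k p) : ℂ)‖
        = ‖(inner ℂ (A (X (k p))) (k p) : ℂ) - (inner ℂ (X (adj A (k p))) (k p) : ℂ)‖ := by
          simp [ContinuousLinearMap.sub_apply, ContinuousLinearMap.mul_apply, inner_sub_left]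
      _ ≤ ‖(inner ℂ (A (X (k p))) (k p) : ℂ)‖ + ‖(inner ℂ (X (adj A (k p))) (k p) : ℂ)‖ :=
          norm_sub_le _ _
      _ ≤ ‖A‖ * ‖X (k p)‖ + ‖A‖ * ‖X (k p)‖ := add_le_add (hA1 p) (hA2 p)
      _ = 2 * ‖A‖ * ‖X (k p)‖ := by ring
      _ ≤ 2 * ‖A‖ * Real.sqrt (ber k (X * X)) := by
          gcongr
          · exact hXk p
end

section
/- Let A, X be bounded operators on a reproducing kernel Hilbert space with X self-adjoint. Then ber(AX) ≤ ‖A‖ · ber(X²)^{1/2}. -/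
variable {E : Type*} [NormedAddCommGroup E] [InnerProductSpace ℂ E] [CompleteSpace E] {Ω : Type*}

theorem stmt5 (k : Ω → E) (hk : ∀ p, ‖k p‖ = 1) (A X : E →L[ℂ] E) (hX : adj X = X) :
    ber k (A * X) ≤ ‖A‖ * Real.sqrt (ber k (X * X)) := by
  have hbdd : BddAbove (Set.range fun p : Ω => ‖(inner ℂ ((X * X) (k p)) (k p) : ℂ)‖) := by
    refine ⟨‖X * X‖, ?_⟩
    rintro x ⟨p, rfl⟩
    calc ‖(inner ℂ ((X * X) (k p)) (k p) : ℂ)‖ ≤ ‖(X * X) (k p)‖ * ‖k p‖ :=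
          norm_inner_le_norm _ _
      _ ≤ (‖X * X‖ * ‖k p‖) * ‖k p‖ := by gcongr; exact (X * X).le_opNorm _
      _ = ‖X * X‖ := by rw [hk p]; ring
  refine Real.iSup_le (fun p => ?_) (by positivity)
  have hXk2 : ‖X (k p)‖ ^ 2 ≤ ber k (X * X) := by
    have h1 : (inner ℂ ((X * X) (k p)) (k p) : ℂ) = inner ℂ (X (k p)) (X (k p)) := by
      have : (X * X) (k p) = (adj X) (X (k p)) := by rw [hX]; rfl
      rw [this, adj, ContinuousLinearMap.adjoint_inner_left]
    have h2 : ‖(inner ℂ ((X * X) (k p)) (k p) : ℂ)‖ = ‖X (k p)‖ ^ 2 := by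
      rw [h1, inner_self_eq_norm_sq_to_K]
      simp [norm_pow]
    rw [← h2]
    exact le_ciSup hbdd p
  have hXk : ‖X (k p)‖ ≤ Real.sqrt (ber k (X * X)) := by
    have := Real.sqrt_le_sqrt hXk2
    rwa [Real.sqrt_sq (norm_nonneg _)] at this
  calc ‖(inner ℂ ((A * X) (k p)) (k p) : ℂ)‖
      = ‖(inner ℂ (X (k p)) ((adj A) (k p)) : ℂ)‖ := by
        rw [adj, ContinuousLinearMap.adjoint_inner_right]; rfl
    _ ≤ ‖X (k p)‖ * ‖(adj A) (k p)‖ := norm_inner_le_norm _ _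
    _ ≤ Real.sqrt (ber k (X * X)) * (‖adj A‖ * ‖k p‖) := by
        gcongr
        · exact (adj A).le_opNorm _
    _ = ‖A‖ * Real.sqrt (ber k (X * X)) := by
        rw [hk p, adj, LinearIsometryEquiv.norm_map ContinuousLinearMap.adjoint A]; ring
end

section
/- For bounded operators A, X on a reproducing kernel Hilbert space, ber(AX ± XA) ≤ ber(A*A + AA*)^{1/2} · ber(X*X + XX*)^{1/2}. -/
variable {E : Type*} [NormedAddCommGroup E] [InnerProductSpace ℂ E] [CompleteSpace E] {Ω : Type*}

set_option linter.unusedSectionVars false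

lemma ber_bdd (k : Ω → E) (hk : ∀ p, ‖k p‖ = 1) (T : E →L[ℂ] E) :
    BddAbove (Set.range fun p => ‖(inner ℂ (T (k p)) (k p) : ℂ)‖) := by
  refine ⟨‖T‖, ?_⟩
  rintro _ ⟨p, rfl⟩
  calc ‖(inner ℂ (T (k p)) (k p) : ℂ)‖ ≤ ‖T (k p)‖ * ‖k p‖ := norm_inner_le_norm _ _
    _ ≤ ‖T‖ * ‖k p‖ * ‖k p‖ := by
        gcongr; exact T.le_opNorm _
    _ = ‖T‖ := by rw [hk]; ring

lemma sum_sq_le (k : Ω → E) (hk : ∀ p, ‖k p‖ = 1) (A : E →L[ℂ] E) (p : Ω) :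
    ‖A (k p)‖ ^ 2 + ‖adj A (k p)‖ ^ 2 ≤ ber k (adj A * A + A * adj A) := by
  have h := le_ciSup (ber_bdd k hk (adj A * A + A * adj A)) p
  have heq : (inner ℂ ((adj A * A + A * adj A) (k p)) (k p) : ℂ)
      = ((‖A (k p)‖ ^ 2 + ‖adj A (k p)‖ ^ 2 : ℝ) : ℂ) := by
    simp only [ContinuousLinearMap.add_apply, ContinuousLinearMap.mul_apply, inner_add_left, adj,
      ContinuousLinearMap.adjoint_inner_left, ContinuousLinearMap.adjoint_inner_right,
      inner_self_eq_norm_sq_to_K]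
    rw [← ContinuousLinearMap.adjoint_inner_right, inner_self_eq_norm_sq_to_K]
    norm_cast
  rw [heq] at h
  calc ‖A (k p)‖ ^ 2 + ‖adj A (k p)‖ ^ 2
      = ‖((‖A (k p)‖ ^ 2 + ‖adj A (k p)‖ ^ 2 : ℝ) : ℂ)‖ := by
        rw [Complex.norm_real]; exact (Real.norm_of_nonneg (by positivity)).symm
    _ ≤ _ := h

lemma ptwise (k : Ω → E) (hk : ∀ p, ‖k p‖ = 1) (A X : E →L[ℂ] E) (p : Ω) :
    ‖(inner ℂ ((A * X) (k p)) (k p) : ℂ)‖ + ‖(inner ℂ ((X * A) (k p)) (k p) : ℂ)‖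
      ≤ Real.sqrt (ber k (adj A * A + A * adj A)) * Real.sqrt (ber k (adj X * X + X * adj X)) := by
  set u := k p
  set a := ‖A u‖; set a' := ‖adj A u‖; set x := ‖X u‖; set x' := ‖adj X u‖
  have h1 : ‖(inner ℂ ((A * X) u) u : ℂ)‖ ≤ x * a' := by
    rw [ContinuousLinearMap.mul_apply, ← ContinuousLinearMap.adjoint_inner_right]
    exact norm_inner_le_norm _ _
  have h2 : ‖(inner ℂ ((X * A) u) u : ℂ)‖ ≤ a * x' := by
    rw [ContinuousLinearMap.mul_apply, ← ContinuousLinearMap.adjoint_inner_right]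
    exact norm_inner_le_norm _ _
  have hA := sum_sq_le k hk A p
  have hX := sum_sq_le k hk X p
  have hAnn : (0:ℝ) ≤ ber k (adj A * A + A * adj A) := le_trans (by positivity) hA
  have hXnn : (0:ℝ) ≤ ber k (adj X * X + X * adj X) := le_trans (by positivity) hX
  have key : x * a' + a * x' ≤ Real.sqrt (ber k (adj A * A + A * adj A)) *
      Real.sqrt (ber k (adj X * X + X * adj X)) := by
    rw [← Real.sqrt_mul hAnn]
    rw [show x * a' + a * x' = |x * a' + a * x'| from (abs_of_nonneg (by positivity)).symm,
      ← Real.sqrt_sq_eq_abs]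
    apply Real.sqrt_le_sqrt
    calc (x * a' + a * x') ^ 2 ≤ (a ^ 2 + a' ^ 2) * (x ^ 2 + x' ^ 2) := by
          nlinarith [sq_nonneg (a * x - a' * x')]
      _ ≤ _ := mul_le_mul hA hX (by positivity) hAnn
  linarith


theorem stmt6 (k : Ω → E) (hk : ∀ p, ‖k p‖ = 1) (A X : E →L[ℂ] E) :
    ber k (A * X + X * A) ≤ Real.sqrt (ber k (adj A * A + A * adj A)) * Real.sqrt (ber k (adj X * X + X * adj X)) ∧
    ber k (A * X - X * A) ≤ Real.sqrt (ber k (adj A * A + A * adj A)) * Real.sqrt (ber k (adj X * X + X * adj X)) := by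
  constructor <;>
  · apply Real.iSup_le _ (by positivity)
    intro p
    refine le_trans ?_ (ptwise k hk A X p)
    simp only [ContinuousLinearMap.add_apply, ContinuousLinearMap.sub_apply, inner_add_left,
      inner_sub_left]
    first
      | exact norm_add_le _ _
      | exact (norm_sub_le _ _).trans (by rfl)
end

section
/- For a bounded operator X on a reproducing kernel Hilbert space, ber(X)² ≤ (1/2) ber(X*X + XX*). -/
variable {E : Type*} [NormedAddCommGroup E] [InnerProductSpace ℂ E] [CompleteSpace E] {Ω : Type*}

theorem stmt9 (k : Ω → E) (hk : ∀ p, ‖k p‖ = 1) (X : E →L[ℂ] E) :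
    (ber k X) ^ 2 ≤ (1 / 2) * ber k (adj X * X + X * adj X) := by
  set T := adj X * X + X * adj X with hT
  have hberT : 0 ≤ ber k T := Real.iSup_nonneg fun p => norm_nonneg _
  set c : ℝ := (1 / 2) * ber k T with hc
  have hc0 : 0 ≤ c := by positivity
  -- value of the quadratic form of T
  have hg : ∀ p, (‖X (k p)‖ ^ 2 + ‖adj X (k p)‖ ^ 2)
      = ‖(inner ℂ (T (k p)) (k p) : ℂ)‖ := by
    intro p
    have e1 : (inner ℂ ((adj X * X) (k p)) (k p) : ℂ) = ((‖X (k p)‖ : ℂ)) ^ 2 := by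
      rw [ContinuousLinearMap.mul_apply, adj, ContinuousLinearMap.adjoint_inner_left,
        inner_self_eq_norm_sq_to_K]
      norm_cast
    have e2 : (inner ℂ ((X * adj X) (k p)) (k p) : ℂ) = ((‖adj X (k p)‖ : ℂ)) ^ 2 := by
      rw [ContinuousLinearMap.mul_apply, adj, ← ContinuousLinearMap.adjoint_inner_right,
        inner_self_eq_norm_sq_to_K]
      norm_cast
    have h1 : (inner ℂ (T (k p)) (k p) : ℂ)
        = ((‖X (k p)‖ ^ 2 + ‖adj X (k p)‖ ^ 2 : ℝ) : ℂ) := by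
      rw [hT, ContinuousLinearMap.add_apply, inner_add_left, e1, e2]
      push_cast; ring
    rw [h1, Complex.norm_real, Real.norm_eq_abs, abs_of_nonneg (by positivity)]
  have hbddT : BddAbove (Set.range fun p => ‖(inner ℂ (T (k p)) (k p) : ℂ)‖) := by
    refine ⟨‖T‖, ?_⟩
    rintro _ ⟨p, rfl⟩
    calc ‖(inner ℂ (T (k p)) (k p) : ℂ)‖ ≤ ‖T (k p)‖ * ‖k p‖ := norm_inner_le_norm _ _
      _ ≤ ‖T‖ * ‖k p‖ * ‖k p‖ := by
          gcongr; exact ContinuousLinearMap.le_opNorm T (k p)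
      _ = ‖T‖ := by rw [hk p]; ring
  -- pointwise bound
  have key : ∀ p, ‖(inner ℂ (X (k p)) (k p) : ℂ)‖ ^ 2 ≤ c := by
    intro p
    have ha : ‖(inner ℂ (X (k p)) (k p) : ℂ)‖ ≤ ‖X (k p)‖ := by
      calc ‖(inner ℂ (X (k p)) (k p) : ℂ)‖ ≤ ‖X (k p)‖ * ‖k p‖ := norm_inner_le_norm _ _
        _ = ‖X (k p)‖ := by rw [hk p, mul_one]
    have hb : ‖(inner ℂ (X (k p)) (k p) : ℂ)‖ ≤ ‖adj X (k p)‖ := by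
      have : (inner ℂ (X (k p)) (k p) : ℂ) = inner ℂ (k p) (adj X (k p)) := by
        rw [adj, ContinuousLinearMap.adjoint_inner_right]
      rw [this]
      calc ‖(inner ℂ (k p) (adj X (k p)) : ℂ)‖ ≤ ‖k p‖ * ‖adj X (k p)‖ := norm_inner_le_norm _ _
        _ = ‖adj X (k p)‖ := by rw [hk p, one_mul]
    have hgle : ‖(inner ℂ (T (k p)) (k p) : ℂ)‖ ≤ ber k T := le_ciSup hbddT p
    have := hg p
    have h0 : 0 ≤ ‖(inner ℂ (X (k p)) (k p) : ℂ)‖ := norm_nonneg _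
    nlinarith [sq_nonneg (‖X (k p)‖ - ‖adj X (k p)‖)]
  rcases isEmpty_or_nonempty Ω with h | h
  · have : ber k X = 0 := by
      simp [ber, iSup, Set.range_eq_empty, Real.sSup_empty]
    rw [this]
    simpa using hc0
  · have hle : ber k X ≤ Real.sqrt c := by
      refine ciSup_le fun p => ?_
      calc ‖(inner ℂ (X (k p)) (k p) : ℂ)‖
          = Real.sqrt (‖(inner ℂ (X (k p)) (k p) : ℂ)‖ ^ 2) := (Real.sqrt_sq (norm_nonneg _)).symm
        _ ≤ Real.sqrt c := Real.sqrt_le_sqrt (key p)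
    have h0 : 0 ≤ ber k X := Real.iSup_nonneg fun p => norm_nonneg _
    calc (ber k X) ^ 2 ≤ (Real.sqrt c) ^ 2 := by gcongr
      _ = c := Real.sq_sqrt hc0
end
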